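/- The class 𝒫 is stable under differentiation: every φ ∈ 𝒫 is differentiable on (0,∞) and its derivative φ′ belongs to 𝒫. -/

import Mathlib

/-- A sequence of complex numbers has polynomial growth. -/
def PolyGrowth (c : ℕ → ℂ) : Prop :=
  ∃ (C : ℝ) (k : ℕ), 0 < C ∧ ∀ n : ℕ, ‖c n‖ ≤ C * (1 + n) ^ k

/-- The expansion `Σ_{j=0}^{J} y^j Σ_{n=0}^∞ a_n^{(j)} e^{-2πny/N}`. -/
noncomputable def expSum (N : ℕ) (J : ℕ) (a : ℕ → ℕ → ℂ) (y : ℝ) : ℂ :=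
  ∑ j ∈ Finset.range (J + 1),
    (y : ℂ) ^ j * ∑' n : ℕ, a j n * (Real.exp (-(2 * Real.pi * n * y / N)) : ℂ)

/-- Membership in the class `𝒫` of functions on `(0,∞)` (Definition 6.3 of the paper):
`φ(y)` and `φ(1/y)` both admit absolutely convergent expansions
`Σ_{j} y^j Σ_{n≥0} c_n^{(j)} e^{-2πny/N}` with coefficients of polynomial growth. -/
def MemP (N : ℕ) (φ : ℝ → ℂ) : Prop :=
  ∃ (jI j0 : ℕ) (a b : ℕ → ℕ → ℂ),
    (∀ j, PolyGrowth (a j)) ∧ (∀ j, PolyGrowth (b j)) ∧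
    (∀ y : ℝ, 0 < y →
      (∀ j, Summable fun n : ℕ => ‖a j n‖ * Real.exp (-(2 * Real.pi * n * y / N))) ∧
      (∀ j, Summable fun n : ℕ => ‖b j n‖ * Real.exp (-(2 * Real.pi * n * y / N))) ∧
      φ y = expSum N jI a y ∧ φ (1 / y) = expSum N j0 b y)

open Finset Real

lemma pg_zero : PolyGrowth (fun _ => 0) := ⟨1, 0, one_pos, by simp⟩

lemma pg_add {c d : ℕ → ℂ} (hc : PolyGrowth c) (hd : PolyGrowth d) :
    PolyGrowth (fun n => c n + d n) := by
  obtain ⟨C, k, hC, hc⟩ := hc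
  obtain ⟨D, l, hD, hd⟩ := hd
  refine ⟨C + D, k + l, by positivity, fun n => ?_⟩
  have h1 : (1:ℝ) ≤ (1 + n) := by simp [Nat.cast_nonneg]
  calc ‖c n + d n‖ ≤ ‖c n‖ + ‖d n‖ := norm_add_le _ _
    _ ≤ C * (1 + n) ^ k + D * (1 + n) ^ l := add_le_add (hc n) (hd n)
    _ ≤ C * (1 + n) ^ (k + l) + D * (1 + n) ^ (k + l) := by
        gcongr <;> [omega; omega]
    _ = (C + D) * (1 + n) ^ (k + l) := by ring

lemma pg_const_mul {c : ℕ → ℂ} (z : ℂ) (hc : PolyGrowth c) :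
    PolyGrowth (fun n => z * c n) := by
  obtain ⟨C, k, hC, hc⟩ := hc
  refine ⟨(‖z‖ + 1) * C, k, by positivity, fun n => ?_⟩
  rw [norm_mul, mul_assoc]
  have := hc n
  have h0 : (0:ℝ) ≤ C * (1 + n) ^ k := le_trans (norm_nonneg _) this
  nlinarith [norm_nonneg z, norm_nonneg (c n)]

lemma pg_nat_mul {c : ℕ → ℂ} (hc : PolyGrowth c) :
    PolyGrowth (fun n => (n : ℂ) * c n) := by
  obtain ⟨C, k, hC, hc⟩ := hc
  refine ⟨C, k + 1, hC, fun n => ?_⟩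
  rw [norm_mul]
  have h1 : ‖(n : ℂ)‖ = (n : ℝ) := by simp
  rw [h1, pow_succ]
  calc (n:ℝ) * ‖c n‖ ≤ (1 + n) * (C * (1 + n) ^ k) := by
        apply mul_le_mul _ (hc n) (norm_nonneg _) (by positivity); linarith
    _ = C * ((1 + n) ^ k * (1 + n)) := by ring

set_option maxHeartbeats 1000000 in
lemma pg_summable {N : ℕ} (hN : 1 ≤ N) {c : ℕ → ℂ} (hc : PolyGrowth c) {y : ℝ} (hy : 0 < y) :
    Summable fun n : ℕ => ‖c n‖ * Real.exp (-(2 * Real.pi * n * y / N)) := by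
  obtain ⟨C, k, hC, hc⟩ := hc
  set r : ℝ := Real.exp (-(2 * Real.pi * y / N)) with hr
  have hN0 : (0:ℝ) < N := by exact_mod_cast hN
  have hrpos : 0 < r := Real.exp_pos _
  have hr1 : r < 1 := by
    rw [hr, Real.exp_lt_one_iff]
    have : 0 < 2 * Real.pi * y / N := by positivity
    linarith
  have hgeo : Summable fun n : ℕ => ((n:ℝ)) ^ k * r ^ n :=
    summable_pow_mul_geometric_of_norm_lt_one k (by rw [Real.norm_eq_abs, abs_of_pos hrpos]; exact hr1)
  have hgeo1 : Summable fun n : ℕ => ((1:ℝ) + n) ^ k * r ^ n := by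
    have h2 : Summable fun n : ℕ => (((n+1:ℕ):ℝ)) ^ k * r ^ (n+1) :=
      (summable_nat_add_iff 1).mpr hgeo
    have h3 := h2.mul_right r⁻¹
    apply h3.congr
    intro n
    push_cast
    rw [pow_succ, mul_assoc, mul_assoc, mul_inv_cancel₀ hrpos.ne', mul_one, add_comm (n:ℝ) 1]
  refine Summable.of_nonneg_of_le (f := fun n : ℕ => C * (((1:ℝ) + n) ^ k * r ^ n))
    (fun n => by positivity) (fun n => ?_) (hgeo1.mul_left C)
  have hexp : Real.exp (-(2 * Real.pi * n * y / N)) = r ^ n := by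
    rw [hr, ← Real.exp_nat_mul]
    congr 1
    push_cast
    ring
  rw [hexp]
  have := hc n
  calc ‖c n‖ * r ^ n ≤ (C * (1 + n) ^ k) * r ^ n := by gcongr
    _ = C * ((1 + n) ^ k * r ^ n) := by ring

noncomputable def EE (N n : ℕ) (y : ℝ) : ℂ := (Real.exp (-(2 * Real.pi * n * y / N)) : ℂ)

lemma hasDerivAt_EE (N n : ℕ) (y : ℝ) :
    HasDerivAt (EE N n) ((((-(2 * Real.pi * n / N)) : ℝ) : ℂ) * EE N n y) y := by
  have h0 : (fun x : ℝ => -(2 * Real.pi * n * x / N)) =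
      fun x : ℝ => (-(2 * Real.pi * n / N)) * x := by funext x; ring
  have h1 : HasDerivAt (fun x : ℝ => -(2 * Real.pi * n * x / N)) (-(2 * Real.pi * n / N)) y := by
    rw [h0]; simpa using (hasDerivAt_id y).const_mul (-(2 * Real.pi * (n:ℝ) / N))
  have h2 := h1.exp
  have h3 := h2.ofReal_comp
  have : EE N n = fun x : ℝ => ((Real.exp (-(2 * Real.pi * n * x / N)) : ℝ) : ℂ) := rfl
  rw [this]
  convert h3 using 1
  push_cast [EE]
  ring

lemma norm_EE (N n : ℕ) (x : ℝ) : ‖EE N n x‖ = Real.exp (-(2 * Real.pi * n * x / N)) := by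
  rw [show EE N n x = ((Real.exp (-(2 * Real.pi * n * x / N)) : ℝ) : ℂ) from rfl,
    Complex.norm_real, Real.norm_eq_abs, Real.abs_exp]

lemma summable_rows {N : ℕ} (hN : 1 ≤ N) {c : ℕ → ℂ} (hc : PolyGrowth c) {y : ℝ} (hy : 0 < y) :
    Summable fun n : ℕ => c n * EE N n y := by
  apply Summable.of_norm
  apply (pg_summable hN hc hy).congr
  intro n
  rw [norm_mul, norm_EE]

lemma hasDerivAt_tsum_EE {N : ℕ} (hN : 1 ≤ N) {c : ℕ → ℂ} (hc : PolyGrowth c) {y : ℝ} (hy : 0 < y) :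
    HasDerivAt (fun x : ℝ => ∑' n : ℕ, c n * EE N n x)
      (∑' n : ℕ, (((-(2 * Real.pi * n / N)) : ℝ) : ℂ) * c n * EE N n y) y := by
  have hd : PolyGrowth (fun n : ℕ => (((2 * Real.pi * n / N : ℝ)) : ℂ) * c n) := by
    have he : (fun n : ℕ => (((2 * Real.pi * n / N : ℝ)) : ℂ) * c n) =
        fun n : ℕ => (((2 * Real.pi / N : ℝ)) : ℂ) * ((n : ℂ) * c n) := by
      funext n; push_cast; ring
    rw [he]; exact pg_const_mul _ (pg_nat_mul hc)
  have hu : Summable fun n : ℕ =>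
      ‖(((2 * Real.pi * n / N : ℝ)) : ℂ) * c n‖ * Real.exp (-(2 * Real.pi * n * (y/2) / N)) :=
    pg_summable hN hd (half_pos hy)
  have key := hasDerivAt_tsum_of_isPreconnected (F := ℂ) (𝕜 := ℝ) hu isOpen_Ioi
    (isPreconnected_Ioi)
    (g := fun n x => c n * EE N n x)
    (g' := fun n x => (((-(2 * Real.pi * n / N)) : ℝ) : ℂ) * c n * EE N n x)
    (y₀ := y) (y := y)
    (fun n x _ => by
      have := (hasDerivAt_EE N n x).const_mul (c n)
      exact this.congr_deriv (by ring))
    (fun n x hx => by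
      rw [norm_mul, norm_mul, norm_EE]
      have h1 : ‖((((-(2 * Real.pi * n / N)) : ℝ)) : ℂ)‖ = ‖(((2 * Real.pi * n / N : ℝ)) : ℂ)‖ := by
        simp
      rw [h1, ← norm_mul]
      have hx' : y / 2 ≤ x := le_of_lt hx
      gcongr)
    (Set.mem_Ioi.mpr (half_lt_self hy))
    (summable_rows hN hc hy)
    (Set.mem_Ioi.mpr (half_lt_self hy))
  exact key

noncomputable def Srow (N : ℕ) (c : ℕ → ℕ → ℂ) (y : ℝ) (j : ℕ) : ℂ :=
  ∑' n : ℕ, c j n * EE N n y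

noncomputable def Trow (N : ℕ) (c : ℕ → ℕ → ℂ) (y : ℝ) (j : ℕ) : ℂ :=
  ∑' n : ℕ, (((-(2 * Real.pi * n / N)) : ℝ) : ℂ) * c j n * EE N n y

noncomputable def dcoef (N : ℕ) (c : ℕ → ℕ → ℂ) (j n : ℕ) : ℂ :=
  ((j:ℂ) + 1) * c (j+1) n + (((-(2 * Real.pi * n / N)) : ℝ) : ℂ) * c j n

lemma pg_Tcoef {N : ℕ} {c : ℕ → ℂ} (hc : PolyGrowth c) :
    PolyGrowth (fun n : ℕ => (((-(2 * Real.pi * n / N)) : ℝ) : ℂ) * c n) := by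
  have he : (fun n : ℕ => (((-(2 * Real.pi * n / N)) : ℝ) : ℂ) * c n)
      = fun n : ℕ => (((-(2 * Real.pi / N) : ℝ)) : ℂ) * ((n : ℂ) * c n) := by
    funext n; push_cast; ring
  rw [he]; exact pg_const_mul _ (pg_nat_mul hc)

lemma pg_dcoef {N : ℕ} {c : ℕ → ℕ → ℂ} (hc : ∀ j, PolyGrowth (c j)) (j : ℕ) :
    PolyGrowth (dcoef N c j) := by
  unfold dcoef
  exact pg_add (pg_const_mul _ (hc (j+1))) (pg_Tcoef (hc j))

lemma Srow_zero {N : ℕ} {c : ℕ → ℕ → ℂ} {y : ℝ} {j : ℕ} (h : ∀ n, c j n = 0) :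
    Srow N c y j = 0 := by simp [Srow, h]

lemma Trow_zero {N : ℕ} {c : ℕ → ℕ → ℂ} {y : ℝ} {j : ℕ} (h : ∀ n, c j n = 0) :
    Trow N c y j = 0 := by simp [Trow, h]

lemma Trow_summable {N : ℕ} (hN : 1 ≤ N) {c : ℕ → ℕ → ℂ} (hc : ∀ j, PolyGrowth (c j))
    {y : ℝ} (hy : 0 < y) (j : ℕ) :
    Summable fun n : ℕ => (((-(2 * Real.pi * n / N)) : ℝ) : ℂ) * c j n * EE N n y :=
  summable_rows hN (pg_Tcoef (hc j)) hy

lemma hasDerivAt_expSum {N : ℕ} (hN : 1 ≤ N) {J : ℕ} {c : ℕ → ℕ → ℂ}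
    (hc : ∀ j, PolyGrowth (c j)) (h0 : ∀ j, J < j → ∀ n, c j n = 0)
    {y : ℝ} (hy : 0 < y) :
    HasDerivAt (expSum N J c) (expSum N (J+1) (dcoef N c) y) y := by
  have hterm : ∀ j : ℕ, HasDerivAt (fun x : ℝ => ((x:ℝ):ℂ)^j * ∑' n : ℕ, c j n * EE N n x)
      ((j:ℂ) * ((y:ℝ):ℂ)^(j-1) * Srow N c y j + ((y:ℝ):ℂ)^j * Trow N c y j) y := by
    intro j
    have hpow : HasDerivAt (fun x : ℝ => ((x:ℝ):ℂ)^j) ((j:ℂ) * ((y:ℝ):ℂ)^(j-1)) y := by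
      have he : (fun x : ℝ => ((x:ℝ):ℂ)^j) = fun x : ℝ => (((x^j : ℝ)):ℂ) := by
        funext x; push_cast; ring
      rw [he]
      have h := (hasDerivAt_pow j y).ofReal_comp
      convert h using 1
      push_cast
      ring
    exact hpow.mul (hasDerivAt_tsum_EE hN (hc j) hy)
  have hF : HasDerivAt (expSum N J c)
      (∑ j ∈ Finset.range (J+1),
        ((j:ℂ) * ((y:ℝ):ℂ)^(j-1) * Srow N c y j + ((y:ℝ):ℂ)^j * Trow N c y j)) y := by
    have := HasDerivAt.fun_sum (u := Finset.range (J+1)) (fun j _ => hterm j)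
    exact this
  convert hF using 1
  -- algebra: expSum N (J+1) (dcoef N c) y equals the derivative sum
  have hsplit : ∀ j : ℕ, (∑' n : ℕ, dcoef N c j n * (Real.exp (-(2 * Real.pi * n * y / N)) : ℂ))
      = ((j:ℂ)+1) * Srow N c y (j+1) + Trow N c y j := by
    intro j
    show (∑' n : ℕ, dcoef N c j n * EE N n y) = _
    have h1 : (fun n : ℕ => dcoef N c j n * EE N n y)
        = fun n : ℕ => ((j:ℂ)+1) * (c (j+1) n * EE N n y)
            + (((-(2 * Real.pi * n / N)) : ℝ) : ℂ) * c j n * EE N n y := by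
      funext n; simp only [dcoef]; ring
    rw [h1, Summable.tsum_add ((summable_rows hN (hc (j+1)) hy).mul_left _) (Trow_summable hN hc hy j),
      tsum_mul_left]
    rfl
  have hSJ1 : Srow N c y (J+1) = 0 := Srow_zero (h0 (J+1) (by omega))
  have hSJ2 : Srow N c y (J+2) = 0 := Srow_zero (h0 (J+2) (by omega))
  have hTJ1 : Trow N c y (J+1) = 0 := Trow_zero (h0 (J+1) (by omega))
  calc expSum N (J+1) (dcoef N c) y
      = ∑ j ∈ Finset.range (J+2),
          (((y:ℝ):ℂ)^j * (((j:ℂ)+1) * Srow N c y (j+1)) + ((y:ℝ):ℂ)^j * Trow N c y j) := by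
        unfold expSum
        apply Finset.sum_congr rfl
        intro j _
        rw [hsplit j]
        ring
    _ = (∑ j ∈ Finset.range (J+2), ((y:ℝ):ℂ)^j * (((j:ℂ)+1) * Srow N c y (j+1)))
        + ∑ j ∈ Finset.range (J+2), ((y:ℝ):ℂ)^j * Trow N c y j := Finset.sum_add_distrib
    _ = (∑ j ∈ Finset.range J, ((y:ℝ):ℂ)^j * (((j:ℂ)+1) * Srow N c y (j+1)))
        + ∑ j ∈ Finset.range (J+1), ((y:ℝ):ℂ)^j * Trow N c y j := by
        rw [Finset.sum_range_succ, Finset.sum_range_succ (n := J),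
          Finset.sum_range_succ (n := J+1)]
        have e1 : J + 1 + 1 = J + 2 := rfl
        rw [show J + 1 + 1 = J + 2 from rfl] at *
        simp [hSJ1, hSJ2, hTJ1]
    _ = ∑ j ∈ Finset.range (J+1),
          ((j:ℂ) * ((y:ℝ):ℂ)^(j-1) * Srow N c y j + ((y:ℝ):ℂ)^j * Trow N c y j) := by
        rw [Finset.sum_add_distrib]
        congr 1
        rw [Finset.sum_range_succ']
        simp only [Nat.cast_zero, zero_mul, mul_zero, add_zero, zero_add]
        apply Finset.sum_congr rfl
        intro i _
        push_cast [Nat.add_sub_cancel]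
        ring

lemma pg_neg {c : ℕ → ℂ} (hc : PolyGrowth c) : PolyGrowth (fun n => -(c n)) := by
  have h := pg_const_mul (-1) hc
  have he : (fun n => (-1 : ℂ) * c n) = fun n => -(c n) := by funext n; ring
  rwa [he] at h

noncomputable def shiftc (d : ℕ → ℕ → ℂ) (j n : ℕ) : ℂ :=
  if 2 ≤ j then -(d (j-2) n) else 0

lemma pg_shiftc {d : ℕ → ℕ → ℂ} (hd : ∀ j, PolyGrowth (d j)) (j : ℕ) :
    PolyGrowth (shiftc d j) := by
  unfold shiftc
  by_cases h : 2 ≤ j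
  · simp only [if_pos h]; exact pg_neg (hd (j-2))
  · simp only [if_neg h]; exact pg_zero

lemma expSum_shiftc (N J : ℕ) (d : ℕ → ℕ → ℂ) (y : ℝ) :
    expSum N (J+2) (shiftc d) y = -((y:ℝ):ℂ)^2 * expSum N J d y := by
  unfold expSum
  rw [show J+2+1 = 2+(J+1) from by omega, Finset.sum_range_add]
  have h0 : ∑ i ∈ Finset.range 2,
      ((y:ℝ):ℂ)^i * ∑' n : ℕ, shiftc d i n * (Real.exp (-(2 * Real.pi * n * y / N)) : ℂ) = 0 := by
    rw [Finset.sum_range_succ, Finset.sum_range_one]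
    simp [shiftc]
  rw [h0, zero_add, Finset.mul_sum]
  apply Finset.sum_congr rfl
  intro i _
  have hterm : (∑' n : ℕ, shiftc d (2+i) n * (Real.exp (-(2 * Real.pi * n * y / N)) : ℂ))
      = -(∑' n : ℕ, d i n * (Real.exp (-(2 * Real.pi * n * y / N)) : ℂ)) := by
    rw [← tsum_neg]
    apply tsum_congr
    intro n
    have : shiftc d (2+i) n = -(d i n) := by
      simp [shiftc, Nat.add_sub_cancel_left, Nat.le_add_right]
    rw [this]
    ring
  rw [hterm, pow_add]
  ring

lemma expSum_trunc (N J : ℕ) (c : ℕ → ℕ → ℂ) (y : ℝ) :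
    expSum N J (fun j => if j ≤ J then c j else fun _ => 0) y = expSum N J c y := by
  unfold expSum
  apply Finset.sum_congr rfl
  intro j hj
  rw [Finset.mem_range, Nat.lt_succ_iff] at hj
  simp [hj]

/-- The class `𝒫` is stable under differentiation: every `φ ∈ 𝒫` is differentiable
on `(0,∞)` and its derivative belongs to `𝒫`. -/
theorem memP_deriv (N : ℕ) (hN : 1 ≤ N) (φ : ℝ → ℂ) (hφ : MemP N φ) :
    (∀ y : ℝ, 0 < y → DifferentiableAt ℝ φ y) ∧ MemP N (deriv φ) := by
  obtain ⟨jI, j0, a, b, ha, hb, hcond⟩ := hφ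
  set A : ℕ → ℕ → ℂ := fun j => if j ≤ jI then a j else fun _ => 0 with hA
  set B : ℕ → ℕ → ℂ := fun j => if j ≤ j0 then b j else fun _ => 0 with hB
  have pga : ∀ j, PolyGrowth (A j) := by
    intro j; rw [hA]; by_cases h : j ≤ jI
    · simp only [if_pos h]; exact ha j
    · simp only [if_neg h]; exact pg_zero
  have pgb : ∀ j, PolyGrowth (B j) := by
    intro j; rw [hB]; by_cases h : j ≤ j0
    · simp only [if_pos h]; exact hb j
    · simp only [if_neg h]; exact pg_zero
  have van_a : ∀ j, jI < j → ∀ n, A j n = 0 := by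
    intro j hj n
    have h : ¬ j ≤ jI := by omega
    rw [hA]; simp only [if_neg h]
  have van_b : ∀ j, j0 < j → ∀ n, B j n = 0 := by
    intro j hj n
    have h : ¬ j ≤ j0 := by omega
    rw [hB]; simp only [if_neg h]
  have heqa : ∀ y : ℝ, 0 < y → φ y = expSum N jI A y := by
    intro y hy; rw [hA, expSum_trunc]; exact (hcond y hy).2.2.1
  have heqb : ∀ y : ℝ, 0 < y → φ (1/y) = expSum N j0 B y := by
    intro y hy; rw [hB, expSum_trunc]; exact (hcond y hy).2.2.2
  have hDa : ∀ y : ℝ, 0 < y → HasDerivAt φ (expSum N (jI+1) (dcoef N A) y) y := by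
    intro y hy
    have h1 := hasDerivAt_expSum hN pga van_a hy
    apply h1.congr_of_eventuallyEq
    filter_upwards [isOpen_Ioi.mem_nhds (Set.mem_Ioi.mpr hy)] with x hx
    exact heqa x hx
  have part1 : ∀ y : ℝ, 0 < y → DifferentiableAt ℝ φ y :=
    fun y hy => (hDa y hy).differentiableAt
  refine ⟨part1, ?_⟩
  have hderiv_eq : ∀ y : ℝ, 0 < y → deriv φ y = expSum N (jI+1) (dcoef N A) y :=
    fun y hy => (hDa y hy).deriv
  have hDb : ∀ y : ℝ, 0 < y →
      deriv φ (1/y) = expSum N (j0+3) (shiftc (dcoef N B)) y := by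
    intro y hy
    have h1 := hasDerivAt_expSum hN pgb van_b hy
    have h2 : HasDerivAt (fun x : ℝ => φ (1/x)) (expSum N (j0+1) (dcoef N B) y) y := by
      apply h1.congr_of_eventuallyEq
      filter_upwards [isOpen_Ioi.mem_nhds (Set.mem_Ioi.mpr hy)] with x hx
      exact heqb x hx
    have hinv : HasDerivAt (fun x : ℝ => 1/x) (-(y^2)⁻¹) y := by
      simpa only [one_div] using hasDerivAt_inv hy.ne'
    have h3 : HasDerivAt φ (deriv φ (1/y)) (1/y) :=
      (part1 (1/y) (by positivity)).hasDerivAt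
    have h4 : HasDerivAt (fun x : ℝ => φ (1/x)) ((-(y^2)⁻¹) • deriv φ (1/y)) y :=
      h3.scomp y hinv
    have h5 := h4.unique h2
    rw [show j0+3 = (j0+1)+2 from rfl, expSum_shiftc, ← h5, Complex.real_smul]
    push_cast
    have hy0 : ((y:ℝ):ℂ) ≠ 0 := Complex.ofReal_ne_zero.mpr hy.ne'
    field_simp
  refine ⟨jI+1, j0+3, dcoef N A, shiftc (dcoef N B),
    fun j => pg_dcoef pga j, fun j => pg_shiftc (fun j => pg_dcoef pgb j) j, ?_⟩
  intro y hy
  exact ⟨fun j => pg_summable hN (pg_dcoef pga j) hy,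
    fun j => pg_summable hN (pg_shiftc (fun j => pg_dcoef pgb j) j) hy,
    hderiv_eq y hy, hDb y hy⟩
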